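/- Let F be a voting method whose domain is the set of all profiles. If F satisfies ordinal margin invariance and weak positive responsiveness, then F selects a unique winner in every uniquely-weighted profile: for every profile P such that Margin_P(a,b) ≠ Margin_P(c,d) whenever a ≠ b, c ≠ d, and (a,b) ≠ (c,d), we have |F(P)| = 1. -/

import Mathlib

/-!
Formalization of notions from "An extension of May's Theorem to three
alternatives: axiomatizing Minimax voting" by Holliday and Pacuit.

The set of voters is the countably infinite set `ℕ`; the set `α` of
alternatives is a type (assumed to have at least three elements where the
paper assumes `|𝒳| ≥ 3`).
-/

namespace MayMinimax

/-- A profile: a finite set of voters drawn from the countably infinite set `ℕ`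
of all voters, a finite set of alternatives, and, for each voter, a binary
relation on alternatives given as a Boolean-valued function:
`P.rel i a b = true` means that voter `i` ranks `a` above `b`. -/
structure Profile (α : Type*) where
  voters : Finset ℕ
  alts : Finset α
  rel : ℕ → α → α → Bool

variable {α : Type*} [DecidableEq α]

/-- Each voter's ballot is a strict weak order (asymmetric and negatively
transitive) on the alternatives. -/
def IsSWO (P : Profile α) : Prop :=
  ∀ i ∈ P.voters,
    (∀ a ∈ P.alts, ∀ b ∈ P.alts, P.rel i a b = true → P.rel i b a = false) ∧
    (∀ a ∈ P.alts, ∀ b ∈ P.alts, ∀ c ∈ P.alts,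
      P.rel i a b = false → P.rel i b c = false → P.rel i a c = false)

/-- The margin of `a` over `b` in `P`: the number of voters ranking `a` above
`b` minus the number of voters ranking `b` above `a`. -/
def Margin (P : Profile α) (a b : α) : ℤ :=
  ((P.voters.filter fun i => P.rel i a b = true).card : ℤ) -
    ((P.voters.filter fun i => P.rel i b a = true).card : ℤ)

/-- The number of voters ranking `a` above `b` in `P`. -/
def Support (P : Profile α) (a b : α) : ℕ :=
  (P.voters.filter fun i => P.rel i a b = true).card

/-- The Minimax score of `a`: the maximum margin of any other alternative over `a`. -/
def MMScore (P : Profile α) (a : α) : ℤ :=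
  WithBot.unbotD 0 (((P.alts.erase a).image fun b => Margin P b a).max)

/-- The set of Minimax winners: alternatives with minimal Minimax score. -/
def Minimax (P : Profile α) : Finset α :=
  P.alts.filter fun a => ∀ b ∈ P.alts, MMScore P a ≤ MMScore P b

/-- Restriction of a profile to a subset `Y` of the alternatives. -/
def Profile.restrict (P : Profile α) (Y : Finset α) : Profile α where
  voters := P.voters
  alts := Y
  rel := fun i a b => P.rel i a b && decide (a ∈ Y) && decide (b ∈ Y)

/-- `P.minus b` is `P` restricted to `X(P) \ {b}`. -/
def Profile.minus (P : Profile α) (b : α) : Profile α :=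
  P.restrict (P.alts.erase b)

/-- The combination `P + Q` of two profiles (used with disjoint voter sets and
the same set of alternatives). -/
def Profile.combine (P Q : Profile α) : Profile α where
  voters := P.voters ∪ Q.voters
  alts := P.alts
  rel := fun i a b => if i ∈ P.voters then P.rel i a b else Q.rel i a b

/-- `2P`: the profile `P` together with a copy of `P` on a disjoint set of voters. -/
def Profile.double (P : Profile α) : Profile α where
  voters := P.voters ∪ P.voters.image fun i => i + (P.voters.sup id + 1)
  alts := P.alts
  rel := fun i a b =>
    if i ∈ P.voters then P.rel i a b else P.rel (i - (P.voters.sup id + 1)) a b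

/-- `r` is (the strict part of) a linear order on the finite set `X`. -/
def IsLinearOn (r : α → α → Bool) (X : Finset α) : Prop :=
  (∀ a ∈ X, r a a = false) ∧
  (∀ a ∈ X, ∀ b ∈ X, ∀ c ∈ X, r a b = true → r b c = true → r a c = true) ∧
  (∀ a ∈ X, ∀ b ∈ X, a ≠ b → (r a b = true ∨ r b a = true)) ∧
  (∀ a ∈ X, ∀ b ∈ X, r a b = true → r b a = false)

/-- `Q` is a block profile for the set `X` of alternatives: it contains, for
each linear order of `X`, exactly one voter submitting that linear order, and
no other voters. -/
def IsBlock (X : Finset α) (Q : Profile α) : Prop :=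
  Q.alts = X ∧
  (∀ i ∈ Q.voters, IsLinearOn (Q.rel i) X) ∧
  (∀ r : α → α → Bool, IsLinearOn r X →
    ∃! i, i ∈ Q.voters ∧ ∀ a ∈ X, ∀ b ∈ X, Q.rel i a b = r a b)

/-- `P'` is obtained from `P` by one voter who ranked `a` uniquely last in `P`
switching to ranking `a` uniquely first in `P'`, with the restriction of that
voter's relation to `X(P) \ {a}` unchanged and all other voters' relations
unchanged. -/
def MoveLastToFirst (P P' : Profile α) (a : α) : Prop :=
  P'.voters = P.voters ∧ P'.alts = P.alts ∧ a ∈ P.alts ∧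
  ∃ i ∈ P.voters,
    (∀ b ∈ P.alts, b ≠ a → P.rel i b a = true) ∧
    (∀ b ∈ P.alts, b ≠ a → P'.rel i a b = true) ∧
    (∀ b ∈ P.alts, b ≠ a → ∀ c ∈ P.alts, c ≠ a → P'.rel i b c = P.rel i b c) ∧
    (∀ j ∈ P.voters, j ≠ i → ∀ x ∈ P.alts, ∀ y ∈ P.alts, P'.rel j x y = P.rel j x y)

/-- `P'` is obtained from `P` by adding one new voter who ranks `a` uniquely
first, all old voters' relations being unchanged. -/
def AddTopVoter (P P' : Profile α) (a : α) : Prop :=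
  P'.alts = P.alts ∧
  ∃ j, j ∉ P.voters ∧ P'.voters = insert j P.voters ∧
    (∀ b ∈ P.alts, b ≠ a → P'.rel j a b = true) ∧
    (∀ i ∈ P.voters, ∀ x ∈ P.alts, ∀ y ∈ P.alts, P'.rel i x y = P.rel i x y)

/-- `P'` is obtained from `P` by one voter improving the position of `a` in
their ballot, while nothing else changes. -/
def ImproveFor (P P' : Profile α) (a : α) : Prop :=
  P'.voters = P.voters ∧ P'.alts = P.alts ∧
  ∃ i ∈ P.voters,
    (∃ b ∈ P.alts, b ≠ a ∧
      ((P.rel i a b = false ∧ P'.rel i a b = true) ∨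
        (P.rel i b a = true ∧ P'.rel i b a = false))) ∧
    (∀ c ∈ P.alts, c ≠ a →
      (P.rel i a c = true → P'.rel i a c = true) ∧
      (P.rel i c a = false → P'.rel i c a = false)) ∧
    (∀ c ∈ P.alts, c ≠ a → ∀ d ∈ P.alts, d ≠ a → P'.rel i c d = P.rel i c d) ∧
    (∀ j ∈ P.voters, j ≠ i → ∀ x ∈ P.alts, ∀ y ∈ P.alts, P'.rel j x y = P.rel j x y)

/-- Anonymity relative to a domain `D` of profiles. -/
def Anonymity (D : Set (Profile α)) (F : Profile α → Finset α) : Prop :=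
  ∀ P ∈ D, ∀ P' ∈ D, P.alts = P'.alts →
    (∃ π : Equiv.Perm ℕ, P.voters.image π = P'.voters ∧
      ∀ i ∈ P.voters, ∀ a ∈ P.alts, ∀ b ∈ P.alts, P.rel i a b = P'.rel (π i) a b) →
    F P = F P'

/-- Neutrality relative to a domain `D` of profiles. -/
def Neutrality (D : Set (Profile α)) (F : Profile α → Finset α) : Prop :=
  ∀ P ∈ D, ∀ P' ∈ D, P.voters = P'.voters →
    ∀ τ : Equiv.Perm α, P.alts.image τ = P'.alts →
      (∀ i ∈ P.voters, ∀ a ∈ P.alts, ∀ b ∈ P.alts, P.rel i a b = P'.rel i (τ a) (τ b)) →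
      (F P).image τ = F P'

/-- Weak positive responsiveness relative to a domain `D` of profiles. -/
def WeakPositiveResponsiveness (D : Set (Profile α)) (F : Profile α → Finset α) : Prop :=
  ∀ P ∈ D, ∀ P' ∈ D, ∀ a ∈ F P, MoveLastToFirst P P' a → F P' = {a}

/-- (Full) positive responsiveness relative to a domain `D` of profiles. -/
def PositiveResponsiveness (D : Set (Profile α)) (F : Profile α → Finset α) : Prop :=
  ∀ P ∈ D, ∀ P' ∈ D, ∀ a ∈ F P, ImproveFor P P' a → F P' = {a}

/-- Positive involvement relative to a domain `D` of profiles. -/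
def PositiveInvolvement (D : Set (Profile α)) (F : Profile α → Finset α) : Prop :=
  ∀ P ∈ D, ∀ P' ∈ D, ∀ a ∈ F P, AddTopVoter P P' a → a ∈ F P'

/-- Near immunity to spoilers relative to a domain `D` of profiles. -/
def NearImmunityToSpoilers (D : Set (Profile α)) (F : Profile α → Finset α) : Prop :=
  ∀ P ∈ D, ∀ a ∈ P.alts, ∀ b ∈ P.alts,
    P.minus b ∈ D → P.restrict {a, b} ∈ D →
    F (P.minus b) = {a} → F (P.restrict {a, b}) = {a} → b ∉ F P → a ∈ F P

/-- Immunity to spoilers relative to a domain `D` of profiles. -/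
def ImmunityToSpoilers (D : Set (Profile α)) (F : Profile α → Finset α) : Prop :=
  ∀ P ∈ D, ∀ a ∈ P.alts, ∀ b ∈ P.alts,
    P.minus b ∈ D → P.restrict {a, b} ∈ D →
    a ∈ F (P.minus b) → F (P.restrict {a, b}) = {a} → b ∉ F P → a ∈ F P

/-- (Inclusion) homogeneity relative to a domain `D` of profiles. -/
def Homogeneity (D : Set (Profile α)) (F : Profile α → Finset α) : Prop :=
  ∀ P ∈ D, P.double ∈ D ∧ F P ⊆ F P.double

/-- Block preservation relative to a domain `D` of profiles. -/
def BlockPreservation (D : Set (Profile α)) (F : Profile α → Finset α) : Prop :=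
  ∀ P ∈ D, ∀ Q ∈ D, Disjoint P.voters Q.voters → IsBlock P.alts Q →
    P.combine Q ∈ D ∧ F P ⊆ F (P.combine Q)

/-- Condorcet consistency relative to a domain `D` of profiles. -/
def CondorcetConsistent (D : Set (Profile α)) (F : Profile α → Finset α) : Prop :=
  ∀ P ∈ D, ∀ c ∈ P.alts, (∀ x ∈ P.alts, x ≠ c → 0 < Margin P c x) → F P = {c}

/-- The domain of all (strict-weak-order) profiles with exactly two alternatives. -/
def Dom2 (α : Type*) : Set (Profile α) :=
  {P | IsSWO P ∧ P.voters.Nonempty ∧ P.alts.card = 2}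

/-- The domain of all profiles with two or three alternatives. -/
def Dom23 (α : Type*) : Set (Profile α) :=
  {P | IsSWO P ∧ P.voters.Nonempty ∧ (P.alts.card = 2 ∨ P.alts.card = 3)}

/-- The domain of all profiles with at least two alternatives. -/
def DomGe2 (α : Type*) : Set (Profile α) :=
  {P | IsSWO P ∧ P.voters.Nonempty ∧ 2 ≤ P.alts.card}

/-- The domain of all profiles. -/
def DomAll (α : Type*) : Set (Profile α) :=
  {P | IsSWO P ∧ P.voters.Nonempty ∧ P.alts.Nonempty}

/-- The support-based Minimax score of `a`: the maximum of `Support P b a`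
over all `b` with a positive margin over `a` (`0` if there is no such `b`). -/
def SupportMMScore (P : Profile α) (a : α) : ℕ :=
  WithBot.unbotD 0 ((((P.alts.erase a).filter fun b => 0 < Margin P b a).image fun b =>
    Support P b a).max)

/-- Support-based Minimax: alternatives with minimal support-based Minimax score. -/
def SupportMinimax (P : Profile α) : Finset α :=
  P.alts.filter fun a => ∀ b ∈ P.alts, SupportMMScore P a ≤ SupportMMScore P b

/-- The set of weak Condorcet winners in `P`. -/
def WeakCondorcetWinners (P : Profile α) : Finset α :=
  P.alts.filter fun a => ∀ x ∈ P.alts, 0 ≤ Margin P a x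

/-- The plurality score of `a`: the number of voters ranking `a` uniquely first. -/
def PluralityScore (P : Profile α) (a : α) : ℕ :=
  (P.voters.filter fun i => ∀ b ∈ P.alts, b ≠ a → P.rel i a b = true).card

/-- The Condorcet-Plurality voting method: the weak Condorcet winners if there
are any; otherwise the alternatives with maximal plurality score. -/
def CP (P : Profile α) : Finset α :=
  if (WeakCondorcetWinners P).Nonempty then WeakCondorcetWinners P
  else P.alts.filter fun a => ∀ b ∈ P.alts, PluralityScore P b ≤ PluralityScore P a

/-- The marginal Borda score of `a`: the sum of the margins of `a` over the
alternatives. -/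
def MarginalBorda (P : Profile α) (a : α) : ℤ :=
  ∑ b ∈ P.alts, Margin P a b

/-- Minimax MB: the Minimax winners with greatest marginal Borda score. -/
def MinimaxMB (P : Profile α) : Finset α :=
  (Minimax P).filter fun a => ∀ b ∈ Minimax P, MarginalBorda P b ≤ MarginalBorda P a

/-- `P` and `P'` have the same ordinal margin graph. -/
def SameOrdinalMarginGraph (P P' : Profile α) : Prop :=
  P.alts = P'.alts ∧
  (∀ a ∈ P.alts, ∀ b ∈ P.alts, (0 < Margin P a b ↔ 0 < Margin P' a b)) ∧
  (∀ a ∈ P.alts, ∀ b ∈ P.alts, ∀ c ∈ P.alts, ∀ d ∈ P.alts,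
    (Margin P c d ≤ Margin P a b ↔ Margin P' c d ≤ Margin P' a b))

/-- Ordinal margin invariance relative to a domain `D` of profiles. -/
def OrdinalMarginInvariance (D : Set (Profile α)) (F : Profile α → Finset α) : Prop :=
  ∀ P ∈ D, ∀ P' ∈ D, SameOrdinalMarginGraph P P' → F P = F P'

/-- `P` is uniquely-weighted: distinct pairs of distinct alternatives have
distinct margins. -/
def UniquelyWeighted (P : Profile α) : Prop :=
  ∀ a ∈ P.alts, ∀ b ∈ P.alts, ∀ c ∈ P.alts, ∀ d ∈ P.alts,
    a ≠ b → c ≠ d → (a, b) ≠ (c, d) → Margin P a b ≠ Margin P c d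

-- AUX START
private lemma margin_self (P : Profile α) (x : α) : Margin P x x = 0 := by
  simp [Margin]

private lemma margin_antisymm (P : Profile α) (x y : α) : Margin P y x = - Margin P x y := by
  simp [Margin]

private lemma margin_ne_zero {P : Profile α} (hUW : UniquelyWeighted P)
    {x y : α} (hx : x ∈ P.alts) (hy : y ∈ P.alts) (hxy : x ≠ y) : Margin P x y ≠ 0 := by
  intro h
  have h2 := hUW x hx y hy y hy x hx hxy hxy.symm
    (by simp [Prod.ext_iff]; intro h'; exact absurd h' hxy)
  have h3 : Margin P y x = - Margin P x y := margin_antisymm P x y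
  omega

/-- `P` together with two extra disjoint copies of `P` and one extra voter
`Nat.pair 3 0` whose ballot is `rJ`. -/
private def extProfile (P : Profile α) (rJ : α → α → Bool) : Profile α where
  voters := ((Finset.range 3) ×ˢ P.voters).image (fun p => Nat.pair p.1 p.2) ∪ {Nat.pair 3 0}
  alts := P.alts
  rel := fun j x y => if j = Nat.pair 3 0 then rJ x y else P.rel (Nat.unpair j).2 x y

private lemma J_not_mem (P : Profile α) :
    Nat.pair 3 0 ∉ ((Finset.range 3) ×ˢ P.voters).image (fun p => Nat.pair p.1 p.2) := by
  simp only [Finset.mem_image, not_exists, Finset.mem_product, Finset.mem_range]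
  rintro ⟨k, i⟩ ⟨⟨hk, -⟩, h⟩
  rw [Nat.pair_eq_pair] at h
  omega

private def eps (rJ : α → α → Bool) (x y : α) : ℤ :=
  (if rJ x y then 1 else 0) - (if rJ y x then 1 else 0)

private lemma support_ext (P : Profile α) (rJ : α → α → Bool) (x y : α) :
    ((extProfile P rJ).voters.filter fun i => (extProfile P rJ).rel i x y = true).card
      = 3 * (P.voters.filter fun i => P.rel i x y = true).card
        + (if rJ x y then 1 else 0) := by
  classical
  delta extProfile
  simp only [Finset.filter_union]
  rw [Finset.card_union_of_disjoint]
  · congr 1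
    · rw [Finset.filter_image]
      rw [Finset.card_image_of_injective _ (by
        intro p q h
        rw [Nat.pair_eq_pair] at h
        exact Prod.ext h.1 h.2)]
      rw [Finset.filter_congr (q := fun p => P.rel p.2 x y = true) (by
        rintro ⟨k, i⟩ hk
        simp only [Finset.mem_product, Finset.mem_range] at hk
        have hne : Nat.pair k i ≠ Nat.pair 3 0 := by
          rw [Ne, Nat.pair_eq_pair]; omega
        simp [hne, Nat.unpair_pair])]
      rw [Finset.filter_product_right (fun i => P.rel i x y = true),
        Finset.card_product, Finset.card_range]
    · rw [Finset.filter_singleton]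
      by_cases h : rJ x y = true <;> simp [h]
  · refine Finset.disjoint_left.2 fun j hj hj' => ?_
    have h1 := Finset.filter_subset _ _ hj
    have h2 := Finset.filter_subset _ _ hj'
    rw [Finset.mem_singleton] at h2
    exact J_not_mem P (h2 ▸ h1)

private lemma margin_ext (P : Profile α) (rJ : α → α → Bool) (x y : α) :
    Margin (extProfile P rJ) x y = 3 * Margin P x y + eps rJ x y := by
  simp only [Margin, support_ext, eps]
  push_cast
  ring

private lemma isSWO_ext {P : Profile α} (hP : IsSWO P) {rJ : α → α → Bool}
    (h1 : ∀ a b, rJ a b = true → rJ b a = false)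
    (h2 : ∀ a b c, rJ a b = false → rJ b c = false → rJ a c = false) :
    IsSWO (extProfile P rJ) := by
  intro j hj
  by_cases hJ : j = Nat.pair 3 0
  · constructor
    · intro a _ b _ h
      simp only [extProfile, if_pos hJ] at h ⊢
      exact h1 a b h
    · intro a _ b _ c _ ha hb
      simp only [extProfile, if_pos hJ] at ha hb ⊢
      exact h2 a b c ha hb
  · have hj' : j ∈ ((Finset.range 3) ×ˢ P.voters).image (fun p => Nat.pair p.1 p.2) := by
      simp only [extProfile] at hj
      rcases Finset.mem_union.1 hj with h | h
      · exact h
      · exact absurd (Finset.mem_singleton.1 h) hJ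
    obtain ⟨p, hp, rfl⟩ := Finset.mem_image.1 hj'
    simp only [Finset.mem_product] at hp
    have hi := hP p.2 hp.2
    constructor
    · intro a ha b hb h
      simp only [extProfile, if_neg hJ, Nat.unpair_pair] at h ⊢
      exact hi.1 a ha b hb h
    · intro a ha b hb c hc h h'
      simp only [extProfile, if_neg hJ, Nat.unpair_pair] at h h' ⊢
      exact hi.2 a ha b hb c hc h h'

private lemma somg_ext {P : Profile α} (hUW : UniquelyWeighted P)
    (rJ : α → α → Bool) (hdiag : ∀ x, rJ x x = false) :
    SameOrdinalMarginGraph P (extProfile P rJ) := by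
  have hb : ∀ x y : α, -1 ≤ eps rJ x y ∧ eps rJ x y ≤ 1 := by
    intro x y
    unfold eps
    split <;> split <;> norm_num
  have hd : ∀ x : α, eps rJ x x = 0 := by
    intro x
    unfold eps
    rw [hdiag x]
    simp
  have hM : ∀ x y : α, Margin (extProfile P rJ) x y = 3 * Margin P x y + eps rJ x y :=
    margin_ext P rJ
  have key : ∀ x ∈ P.alts, ∀ y ∈ P.alts, ∀ c ∈ P.alts, ∀ d ∈ P.alts,
      Margin P x y = Margin P c d → eps rJ x y = eps rJ c d := by
    intro x hx y hy c hc d hd' hm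
    rcases eq_or_ne x y with rfl | hxy
    · rcases eq_or_ne c d with rfl | hcd
      · rw [hd, hd]
      · exact absurd hm.symm (by rw [margin_self]; exact margin_ne_zero hUW hc hd' hcd)
    · rcases eq_or_ne c d with rfl | hcd
      · exact absurd hm (by rw [margin_self]; exact (margin_ne_zero hUW hx hy hxy))
      · rcases eq_or_ne (x, y) (c, d) with hp | hp
        · rw [Prod.mk.injEq] at hp
          rw [hp.1, hp.2]
        · exact absurd hm (hUW x hx y hy c hc d hd' hxy hcd hp)
  refine ⟨rfl, ?_, ?_⟩
  · intro x hx y hy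
    rw [hM]
    rcases eq_or_ne x y with rfl | hxy
    · have h1 := hd x
      rw [margin_self]
      omega
    · have h1 := hb x y
      have h2 := margin_ne_zero hUW hx hy hxy
      omega
  · intro x hx y hy c hc d hd'
    rw [hM, hM]
    have h1 := hb x y
    have h2 := hb c d
    rcases eq_or_ne (Margin P c d) (Margin P x y) with hmeq | hmne
    · have h3 := key c hc d hd' x hx y hy hmeq
      omega
    · omega

/-- A voting method on the domain of all profiles satisfying ordinal margin
invariance and weak positive responsiveness selects a unique winner in every
uniquely-weighted profile. -/
theorem omi_wpr_implies_resolute_on_uniquely_weighted {α : Type*} [DecidableEq α]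
    (hX : ∃ x y z : α, x ≠ y ∧ x ≠ z ∧ y ≠ z)
    (F : Profile α → Finset α)
    (hF : ∀ P ∈ DomAll α, (F P).Nonempty ∧ F P ⊆ P.alts)
    (omi : OrdinalMarginInvariance (DomAll α) F)
    (wpr : WeakPositiveResponsiveness (DomAll α) F) :
    ∀ P ∈ DomAll α, UniquelyWeighted P → (F P).card = 1 := by
  intro P hP hUW
  obtain ⟨hSWO, hVne, hAne⟩ := hP
  obtain ⟨a, ha⟩ := (hF P ⟨hSWO, hVne, hAne⟩).1
  have haA : a ∈ P.alts := (hF P ⟨hSWO, hVne, hAne⟩).2 ha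
  -- the extra voter ranks `a` uniquely last in `Q` and uniquely first in `Q'`
  set rL : α → α → Bool := fun x y => decide (y = a) && !decide (x = a) with hrL
  set rF : α → α → Bool := fun x y => decide (x = a) && !decide (y = a) with hrF
  set Q : Profile α := extProfile P rL with hQdef
  set Q' : Profile α := extProfile P rF with hQ'def
  have hJmem : Nat.pair 3 0 ∈ Q.voters := by
    simp [hQdef, extProfile]
  have hQdom : Q ∈ DomAll α := by
    refine ⟨?_, ⟨_, hJmem⟩, ?_⟩
    · refine isSWO_ext hSWO ?_ ?_
      · intro x y h
        simp only [hrL, Bool.and_eq_true, Bool.not_eq_true', decide_eq_true_eq,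
          decide_eq_false_iff_not, Bool.and_eq_false_iff, Bool.not_eq_false',
          decide_eq_true_eq] at h ⊢
        tauto
      · intro x y z h h'
        simp only [hrL, Bool.and_eq_false_iff, Bool.not_eq_true', decide_eq_false_iff_not,
          decide_eq_true_eq, Bool.not_eq_false', Bool.and_eq_true] at h h' ⊢
        tauto
    · exact hAne
  have hQ'dom : Q' ∈ DomAll α := by
    refine ⟨?_, ⟨_, hJmem⟩, ?_⟩
    · refine isSWO_ext hSWO ?_ ?_
      · intro x y h
        simp only [hrF, Bool.and_eq_true, Bool.not_eq_true', decide_eq_true_eq,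
          decide_eq_false_iff_not, Bool.and_eq_false_iff, Bool.not_eq_false'] at h ⊢
        tauto
      · intro x y z h h'
        simp only [hrF, Bool.and_eq_false_iff, Bool.not_eq_true', decide_eq_false_iff_not,
          decide_eq_true_eq, Bool.not_eq_false', Bool.and_eq_true] at h h' ⊢
        tauto
    · exact hAne
  have hsQ : SameOrdinalMarginGraph P Q :=
    somg_ext hUW rL (by intro x; simp [hrL])
  have hsQ' : SameOrdinalMarginGraph P Q' :=
    somg_ext hUW rF (by intro x; simp [hrF])
  have hFQ : F P = F Q := omi P ⟨hSWO, hVne, hAne⟩ Q hQdom hsQ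
  have hFQ' : F P = F Q' := omi P ⟨hSWO, hVne, hAne⟩ Q' hQ'dom hsQ'
  have hmlf : MoveLastToFirst Q Q' a := by
    refine ⟨rfl, rfl, haA, Nat.pair 3 0, hJmem, ?_, ?_, ?_, ?_⟩
    · intro b _ hb
      simp [hQdef, extProfile, hrL, hb]
    · intro b _ hb
      simp [hQ'def, extProfile, hrF, hb]
    · intro b _ hb c _ hc
      simp [hQdef, hQ'def, extProfile, hrL, hrF, hb, hc]
    · intro j _ hj x _ y _
      simp [hQdef, hQ'def, extProfile, if_neg hj]
  have haQ : a ∈ F Q := hFQ ▸ ha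
  have hres : F Q' = {a} := wpr Q hQdom Q' hQ'dom a haQ hmlf
  rw [hFQ', hres, Finset.card_singleton]


end MayMinimax
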